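/- Let C be the operator (CQ)(t) := cos²(πt/2) Q(t/4) + sin²(πt/2) Q((t−1)/4), acting on W₀ = { Q ∈ C¹([−1/3, 0]) : Q(0) = 1 } with metric d(Q₁,Q₂) = sup_{t∈[−1/3,0]} |Q₁'(t) − Q₂'(t)|. Then C maps W₀ into W₀ and d(C(Q₁), C(Q₂)) ≤ (1/4 + π√3/16) d(Q₁,Q₂) for all Q₁, Q₂ ∈ W₀; in particular C is a strict contraction on the complete metric space (W₀, d). -/

import Mathlib

open Set

/-- The transfer operator `(CQ)(t) = cos²(πt/2) Q(t/4) + sin²(πt/2) Q((t−1)/4)`. -/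
noncomputable def Cop (Q : ℝ → ℝ) (t : ℝ) : ℝ :=
  Real.cos (Real.pi * t / 2) ^ 2 * Q (t / 4) + Real.sin (Real.pi * t / 2) ^ 2 * Q ((t - 1) / 4)

lemma hasDerivAt_Cop (Q : ℝ → ℝ) (hQ : ContDiff ℝ 1 Q) (t : ℝ) :
    HasDerivAt (Cop Q)
      (Real.pi * (Real.sin (Real.pi * t / 2) * Real.cos (Real.pi * t / 2)) *
          (Q ((t - 1) / 4) - Q (t / 4)) +
        (Real.cos (Real.pi * t / 2) ^ 2 * deriv Q (t / 4) +
          Real.sin (Real.pi * t / 2) ^ 2 * deriv Q ((t - 1) / 4)) / 4) t := by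
  have hQd : Differentiable ℝ Q := hQ.differentiable one_ne_zero
  have hin : HasDerivAt (fun t : ℝ => Real.pi * t / 2) (Real.pi / 2) t := by
    simpa using ((hasDerivAt_id t).const_mul Real.pi).div_const 2
  have hcos : HasDerivAt (fun t : ℝ => Real.cos (Real.pi * t / 2))
      (-Real.sin (Real.pi * t / 2) * (Real.pi / 2)) t :=
    (Real.hasDerivAt_cos _).comp t hin
  have hsin : HasDerivAt (fun t : ℝ => Real.sin (Real.pi * t / 2))
      (Real.cos (Real.pi * t / 2) * (Real.pi / 2)) t :=
    (Real.hasDerivAt_sin _).comp t hin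
  have h1 : HasDerivAt (fun t : ℝ => Q (t / 4)) (deriv Q (t / 4) * (1 / 4)) t := by
    have := ((hQd (t / 4)).hasDerivAt).comp t ((hasDerivAt_id t).div_const 4)
    simpa [Function.comp_def] using this
  have h2 : HasDerivAt (fun t : ℝ => Q ((t - 1) / 4)) (deriv Q ((t - 1) / 4) * (1 / 4)) t := by
    have := ((hQd ((t - 1) / 4)).hasDerivAt).comp t
      (((hasDerivAt_id t).sub_const 1).div_const 4)
    simpa [Function.comp_def] using this
  have h := ((hcos.fun_pow 2).fun_mul h1).fun_add ((hsin.fun_pow 2).fun_mul h2)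
  refine HasDerivAt.congr_deriv (f := Cop Q) h ?_
  push_cast
  ring

set_option maxHeartbeats 1000000 in
/-- `C` maps `W₀ = {Q ∈ C¹ : Q(0) = 1}` into itself and is a strict contraction with constant
`1/4 + π√3/16 < 1` for the metric `d(Q₁,Q₂) = sup_{t∈[−1/3,0]} |Q₁'(t) − Q₂'(t)|`. -/
theorem Cop_strict_contraction (Q₁ Q₂ : ℝ → ℝ)
    (hQ₁ : ContDiff ℝ 1 Q₁) (hQ₂ : ContDiff ℝ 1 Q₂)
    (hQ₁0 : Q₁ 0 = 1) (hQ₂0 : Q₂ 0 = 1) :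
    Cop Q₁ 0 = 1 ∧ ContDiff ℝ 1 (Cop Q₁) ∧
    sSup ((fun t => |deriv (Cop Q₁) t - deriv (Cop Q₂) t|) '' Icc (-(1/3) : ℝ) 0)
      ≤ (1 / 4 + Real.pi * Real.sqrt 3 / 16) *
          sSup ((fun t => |deriv Q₁ t - deriv Q₂ t|) '' Icc (-(1/3) : ℝ) 0) ∧
    (1 / 4 + Real.pi * Real.sqrt 3 / 16 : ℝ) < 1 := by
  have pi_pos := Real.pi_pos
  have sqrt3_nonneg : (0:ℝ) ≤ Real.sqrt 3 := Real.sqrt_nonneg 3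
  refine ⟨?_, ?_, ?_, ?_⟩
  · simp [Cop, hQ₁0]
  · unfold Cop
    have hlin1 : ContDiff ℝ 1 (fun t : ℝ => t / 4) := contDiff_id.div_const 4
    have hlin2 : ContDiff ℝ 1 (fun t : ℝ => (t - 1) / 4) :=
      (contDiff_id.sub contDiff_const).div_const 4
    have harg : ContDiff ℝ 1 (fun t : ℝ => Real.pi * t / 2) :=
      (contDiff_const.mul contDiff_id).div_const 2
    exact ((((Real.contDiff_cos.of_le le_top).comp harg).pow 2).mul (hQ₁.comp hlin1)).add
      ((((Real.contDiff_sin.of_le le_top).comp harg).pow 2).mul (hQ₁.comp hlin2))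
  · -- contraction estimate
    set M := sSup ((fun t => |deriv Q₁ t - deriv Q₂ t|) '' Icc (-(1/3) : ℝ) 0) with hMdef
    have hcont : Continuous fun t => |deriv Q₁ t - deriv Q₂ t| :=
      ((hQ₁.continuous_deriv le_rfl).sub (hQ₂.continuous_deriv le_rfl)).abs
    have hbdd : BddAbove ((fun t => |deriv Q₁ t - deriv Q₂ t|) '' Icc (-(1/3) : ℝ) 0) :=
      (isCompact_Icc.image hcont).bddAbove
    have key : ∀ s ∈ Icc (-(1/3) : ℝ) 0, |deriv Q₁ s - deriv Q₂ s| ≤ M :=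
      fun s hs => le_csSup hbdd ⟨s, hs, rfl⟩
    have hMnonneg : 0 ≤ M := by
      refine Real.sSup_nonneg ?_
      rintro x ⟨t, ht, rfl⟩
      positivity
    -- mean value estimate for D = Q₁ - Q₂ on Icc
    have hD : Differentiable ℝ fun x => Q₁ x - Q₂ x :=
      (hQ₁.differentiable one_ne_zero).sub (hQ₂.differentiable one_ne_zero)
    have hderivD : ∀ x, deriv (fun x => Q₁ x - Q₂ x) x = deriv Q₁ x - deriv Q₂ x := by
      intro x
      exact deriv_fun_sub ((hQ₁.differentiable one_ne_zero) x) ((hQ₂.differentiable one_ne_zero) x)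
    have mvt : ∀ x ∈ Icc (-(1/3) : ℝ) 0, ∀ y ∈ Icc (-(1/3) : ℝ) 0,
        |(Q₁ y - Q₂ y) - (Q₁ x - Q₂ x)| ≤ M * |y - x| := by
      intro x hx y hy
      have := (convex_Icc (-(1/3) : ℝ) 0).norm_image_sub_le_of_norm_deriv_le
        (fun z _ => hD z) (C := M)
        (fun z hz => by
          rw [Real.norm_eq_abs, hderivD z]; exact key z hz) hx hy
      simpa [Real.norm_eq_abs] using this
    -- pointwise bound
    have pointwise : ∀ t ∈ Icc (-(1/3) : ℝ) 0,
        |deriv (Cop Q₁) t - deriv (Cop Q₂) t|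
          ≤ (1 / 4 + Real.pi * Real.sqrt 3 / 16) * M := by
      intro t ht
      obtain ⟨ht1, ht2⟩ := ht
      have hmem1 : t / 4 ∈ Icc (-(1/3) : ℝ) 0 := ⟨by linarith, by linarith⟩
      have hmem2 : (t - 1) / 4 ∈ Icc (-(1/3) : ℝ) 0 := ⟨by linarith, by linarith⟩
      rw [(hasDerivAt_Cop Q₁ hQ₁ t).deriv, (hasDerivAt_Cop Q₂ hQ₂ t).deriv]
      set s := Real.sin (Real.pi * t / 2)
      set c := Real.cos (Real.pi * t / 2)
      set d1 := deriv Q₁ (t / 4) - deriv Q₂ (t / 4) with hd1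
      set d2 := deriv Q₁ ((t - 1) / 4) - deriv Q₂ ((t - 1) / 4) with hd2
      set X := (Q₁ ((t - 1) / 4) - Q₂ ((t - 1) / 4)) - (Q₁ (t / 4) - Q₂ (t / 4)) with hX
      have heq : Real.pi * (s * c) * (Q₁ ((t - 1) / 4) - Q₁ (t / 4)) +
            (c ^ 2 * deriv Q₁ (t / 4) + s ^ 2 * deriv Q₁ ((t - 1) / 4)) / 4 -
          (Real.pi * (s * c) * (Q₂ ((t - 1) / 4) - Q₂ (t / 4)) +
            (c ^ 2 * deriv Q₂ (t / 4) + s ^ 2 * deriv Q₂ ((t - 1) / 4)) / 4) =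
          Real.pi * (s * c) * X + (c ^ 2 * d1 + s ^ 2 * d2) / 4 := by
        rw [hX, hd1, hd2]; ring
      rw [heq]
      -- bound on |s * c|
      have hsc : |s * c| ≤ Real.sqrt 3 / 4 := by
        have h2x : Real.sin (Real.pi * t) = 2 * (s * c) := by
          rw [show Real.pi * t = 2 * (Real.pi * t / 2) by ring, Real.sin_two_mul]
          ring
        have hub : Real.sin (Real.pi * t) ≤ 0 := by
          apply Real.sin_nonpos_of_nonpos_of_neg_pi_le
          · nlinarith
          · nlinarith
        have hlb : -(Real.sqrt 3 / 2) ≤ Real.sin (Real.pi * t) := by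
          have hmono := Real.strictMonoOn_sin.monotoneOn
          have h1 : (-(Real.pi / 3) : ℝ) ∈ Icc (-(Real.pi / 2)) (Real.pi / 2) :=
            ⟨by linarith, by linarith⟩
          have h2 : Real.pi * t ∈ Icc (-(Real.pi / 2)) (Real.pi / 2) :=
            ⟨by nlinarith, by nlinarith⟩
          have h3 : (-(Real.pi / 3) : ℝ) ≤ Real.pi * t := by nlinarith
          have := hmono h1 h2 h3
          rwa [Real.sin_neg, Real.sin_pi_div_three] at this
        have habs : |Real.sin (Real.pi * t)| ≤ Real.sqrt 3 / 2 :=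
          abs_le.mpr ⟨by linarith, by linarith⟩
        rw [show s * c = Real.sin (Real.pi * t) / 2 by rw [h2x]; ring, abs_div]
        rw [abs_of_pos (by norm_num : (0:ℝ) < 2)]
        linarith
      have hXb : |X| ≤ M * (1 / 4) := by
        have := mvt (t / 4) hmem1 ((t - 1) / 4) hmem2
        have habs : |(t - 1) / 4 - t / 4| = 1 / 4 := by
          rw [show (t - 1) / 4 - t / 4 = -(1/4) by ring]; norm_num
        rw [habs] at this
        simpa [hX] using this
      have hd1b : |d1| ≤ M := key _ hmem1
      have hd2b : |d2| ≤ M := key _ hmem2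
      have hA : |Real.pi * (s * c) * X| ≤ Real.pi * (Real.sqrt 3 / 4) * (M * (1 / 4)) := by
        rw [abs_mul, abs_mul, abs_of_pos pi_pos]
        exact mul_le_mul (mul_le_mul_of_nonneg_left hsc pi_pos.le) hXb (abs_nonneg X)
          (by positivity)
      have hB : |(c ^ 2 * d1 + s ^ 2 * d2) / 4| ≤ M / 4 := by
        rw [abs_div, abs_of_pos (by norm_num : (0:ℝ) < 4)]
        have : |c ^ 2 * d1 + s ^ 2 * d2| ≤ M := by
          calc |c ^ 2 * d1 + s ^ 2 * d2| ≤ |c ^ 2 * d1| + |s ^ 2 * d2| := abs_add_le _ _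
            _ = c ^ 2 * |d1| + s ^ 2 * |d2| := by
                rw [abs_mul, abs_mul, abs_of_nonneg (sq_nonneg c), abs_of_nonneg (sq_nonneg s)]
            _ ≤ c ^ 2 * M + s ^ 2 * M :=
                add_le_add (mul_le_mul_of_nonneg_left hd1b (sq_nonneg c))
                  (mul_le_mul_of_nonneg_left hd2b (sq_nonneg s))
            _ = M := by
                have hsc1 : s ^ 2 + c ^ 2 = 1 := Real.sin_sq_add_cos_sq _
                linear_combination M * hsc1
        linarith
      calc |Real.pi * (s * c) * X + (c ^ 2 * d1 + s ^ 2 * d2) / 4|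
          ≤ |Real.pi * (s * c) * X| + |(c ^ 2 * d1 + s ^ 2 * d2) / 4| := abs_add_le _ _
        _ ≤ Real.pi * (Real.sqrt 3 / 4) * (M * (1 / 4)) + M / 4 := by linarith
        _ = (1 / 4 + Real.pi * Real.sqrt 3 / 16) * M := by ring
    refine Real.sSup_le ?_ (by positivity)
    rintro x ⟨t, ht, rfl⟩
    exact pointwise t ht
  · -- numeric bound
    have h1 : Real.sqrt 3 < 2 := by
      nlinarith [Real.sq_sqrt (by norm_num : (0:ℝ) ≤ 3), Real.sqrt_nonneg 3]
    have h2 : Real.pi < 3.15 := Real.pi_lt_d2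
    have h3 : Real.pi * Real.sqrt 3 < 3.15 * 2 :=
      mul_lt_mul'' h2 h1 Real.pi_pos.le (Real.sqrt_nonneg 3)
    linarith
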